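/- Infinite divisibility of the Bell distribution: for every θ > 0 and every integer m ≥ 1, there is a probability mass function r_m on ℕ such that p_θ = r_m^{*m} (the m-fold convolution of r_m with itself); explicitly one may take r_m(z) := ∑_{n=0}^∞ (e^{-μ/m} (μ/m)^n / n!) · q^{*n}(z) with μ := e^θ − 1 and q the zero-truncated Poisson(θ) mass function q(y) := θ^y/(y!(e^θ−1)) for y ≥ 1, q(0) := 0. -/

import Mathlib

open Real

/-- The `z`-th Bell number given by Dobinski's formula (with `0^0 = 1`). -/
noncomputable def bellDobinski (z : ℕ) : ℝ :=
  (Real.exp 1)⁻¹ * ∑' k : ℕ, (k : ℝ) ^ z / (Nat.factorial k : ℝ)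

/-- The probability mass function of the Bell distribution with parameter `θ`:
`p_θ(z) = θ^z e^{1 - e^θ} B_z / z!`. -/
noncomputable def bellPMF (θ : ℝ) (z : ℕ) : ℝ :=
  θ ^ z * Real.exp (1 - Real.exp θ) * bellDobinski z / (Nat.factorial z : ℝ)

/-- Convolution of two mass functions on `ℕ`: `(f * g)(z) = ∑_{y=0}^{z} f(y) g(z - y)`. -/
def conv (f g : ℕ → ℝ) : ℕ → ℝ :=
  fun z => ∑ y ∈ Finset.range (z + 1), f y * g (z - y)

/-- `m`-fold convolution of a mass function on `ℕ`, with `f^{*0}` the point mass at `0`. -/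
def convPow (f : ℕ → ℝ) : ℕ → ℕ → ℝ
  | 0 => fun z => if z = 0 then 1 else 0
  | n + 1 => conv f (convPow f n)

/-- The zero-truncated Poisson(θ) mass function: `q(y) = θ^y / (y! (e^θ - 1))` for `y ≥ 1`
and `q(0) = 0`. -/
noncomputable def ztPoisson (θ : ℝ) : ℕ → ℝ :=
  fun y => if y = 0 then 0 else θ ^ y / ((Nat.factorial y : ℝ) * (Real.exp θ - 1))

section BellAux
open Finset PowerSeries




lemma conv_eq_coeff (f g : ℕ → ℝ) (z : ℕ) :
    conv f g z = PowerSeries.coeff z (PowerSeries.mk f * PowerSeries.mk g) := by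
  rw [PowerSeries.coeff_mul, Finset.Nat.sum_antidiagonal_eq_sum_range_succ_mk]
  simp [conv]

lemma mk_convPow (f : ℕ → ℝ) (n : ℕ) :
    PowerSeries.mk (convPow f n) = (PowerSeries.mk f) ^ n := by
  induction n with
  | zero => ext z; cases z <;> simp [convPow, PowerSeries.coeff_one]
  | succ n ih =>
    ext z
    show PowerSeries.coeff z (PowerSeries.mk (conv f (convPow f n))) = _
    rw [PowerSeries.coeff_mk, conv_eq_coeff, ih, pow_succ']

lemma convPow_eq_coeff (f : ℕ → ℝ) (n z : ℕ) :
    convPow f n z = PowerSeries.coeff z ((PowerSeries.mk f) ^ n) := by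
  rw [← mk_convPow, PowerSeries.coeff_mk]

lemma convPow_eq_zero {f : ℕ → ℝ} (hf : f 0 = 0) (n z : ℕ) (h : z < n) :
    convPow f n z = 0 := by
  induction n generalizing z with
  | zero => omega
  | succ n ih =>
    show conv f (convPow f n) z = 0
    refine Finset.sum_eq_zero fun y hy => ?_
    rcases Nat.eq_zero_or_pos y with h0 | h0
    · simp [h0, hf]
    · rw [ih _ (by simp at hy; omega), mul_zero]

noncomputable def Tfun (θ : ℝ) : ℕ → ℝ :=
  fun y => if y = 0 then 0 else θ ^ y / (Nat.factorial y : ℝ)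

lemma mk_Tfun (θ : ℝ) :
    PowerSeries.mk (Tfun θ) = PowerSeries.rescale θ (PowerSeries.exp ℝ) - 1 := by
  ext y
  rw [PowerSeries.coeff_mk, map_sub, PowerSeries.coeff_rescale, PowerSeries.coeff_exp,
    PowerSeries.coeff_one]
  cases y with
  | zero => simp [Tfun]
  | succ n => simp [Tfun, eq_ratCast, div_eq_mul_inv]

lemma convPow_Tfun (θ : ℝ) (n z : ℕ) :
    convPow (Tfun θ) n z =
      ∑ j ∈ Finset.range (n + 1),
        (-1 : ℝ) ^ (j + n) * ((j : ℝ) * θ) ^ z / (Nat.factorial z : ℝ) * (n.choose j : ℝ) := by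
  rw [convPow_eq_coeff, mk_Tfun, sub_pow, map_sum]
  refine Finset.sum_congr rfl fun j hj => ?_
  have h1 : ((PowerSeries.rescale θ (PowerSeries.exp ℝ)) ^ j) =
      PowerSeries.rescale ((j : ℝ) * θ) (PowerSeries.exp ℝ) := by
    rw [← map_pow, PowerSeries.exp_pow_eq_rescale_exp, PowerSeries.rescale_rescale]
  have h2 : ((-1 : ℝ⟦X⟧) ^ (j + n)) = PowerSeries.C ((-1) ^ (j + n)) := by
    rw [map_pow, map_neg, map_one]
  have h3 : ((n.choose j : ℝ⟦X⟧)) = PowerSeries.C (n.choose j : ℝ) := by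
    push_cast
    rw [map_natCast]
  rw [one_pow, mul_one, h1, h2, h3, mul_comm _ (PowerSeries.C ((n.choose j : ℝ))),
    ← mul_assoc, ← map_mul, PowerSeries.coeff_C_mul, PowerSeries.coeff_rescale,
    PowerSeries.coeff_exp]
  simp [eq_ratCast, div_eq_mul_inv]
  ring
lemma hasSum_exp_real (x : ℝ) : HasSum (fun n : ℕ => x ^ n / (Nat.factorial n : ℝ)) (Real.exp x) := by
  rw [Real.exp_eq_exp_ℝ]
  exact NormedSpace.expSeries_div_hasSum_exp x

lemma summable_pow_div_fact (z : ℕ) :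
    Summable fun k : ℕ => (k : ℝ) ^ z / (Nat.factorial k : ℝ) := by
  refine Summable.of_nonneg_of_le (fun k => by positivity) (fun k => ?_)
    (Real.summable_pow_div_factorial ((2 : ℝ) ^ z))
  gcongr
  calc ((k : ℝ)) ^ z ≤ ((2 : ℝ) ^ k) ^ z := by
        gcongr
        · exact_mod_cast (Nat.lt_two_pow_self (n := k)).le
    _ = ((2 : ℝ) ^ z) ^ k := by rw [← pow_mul, ← pow_mul, mul_comm]

lemma inner_eq (θ : ℝ) (z n : ℕ) :
    ∑ k ∈ Finset.range (n + 1),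
        ((-1 : ℝ) ^ k / (Nat.factorial k : ℝ)) *
          ((θ ^ z / (Nat.factorial z : ℝ)) * (((n - k : ℕ) : ℝ) ^ z / (Nat.factorial (n - k) : ℝ)))
      = convPow (Tfun θ) n z / (Nat.factorial n : ℝ) := by
  rw [convPow_Tfun, Finset.sum_div, ← Finset.sum_range_reflect]
  refine Finset.sum_congr rfl fun k hk => ?_
  have hk' : k ≤ n := Nat.lt_succ_iff.mp (Finset.mem_range.mp hk)
  have e1 : n + 1 - 1 - k = n - k := by omega
  have e2 : n - (n - k) = k := by omega
  rw [e1, e2]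
  have h1 : (-1 : ℝ) ^ (k + n) = (-1) ^ (n - k) := by
    have : k + n = 2 * k + (n - k) := by omega
    rw [this, pow_add, pow_mul]
    norm_num
  have hc : ((n.choose k : ℝ)) * (Nat.factorial k : ℝ) * (Nat.factorial (n - k) : ℝ)
      = (Nat.factorial n : ℝ) := by
    exact_mod_cast congrArg (Nat.cast (R := ℝ)) (Nat.choose_mul_factorial_mul_factorial hk')
  rw [h1, mul_pow]
  have hkf : (Nat.factorial k : ℝ) ≠ 0 := by positivity
  have hnkf : (Nat.factorial (n - k) : ℝ) ≠ 0 := by positivity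
  have hnf : (Nat.factorial n : ℝ) ≠ 0 := by positivity
  have hzf : (Nat.factorial z : ℝ) ≠ 0 := by positivity
  field_simp
  rw [← hc]
  ring

lemma bell_eq (θ : ℝ) (z : ℕ) :
    θ ^ z * bellDobinski z / (Nat.factorial z : ℝ) =
      ∑ n ∈ Finset.range (z + 1), convPow (Tfun θ) n z / (Nat.factorial n : ℝ) := by
  set u : ℕ → ℝ := fun i => (-1 : ℝ) ^ i / (Nat.factorial i : ℝ) with hu_def
  set v : ℕ → ℝ := fun j => (θ ^ z / (Nat.factorial z : ℝ)) * ((j : ℝ) ^ z / (Nat.factorial j : ℝ))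
    with hv_def
  have hfac : Summable fun i : ℕ => (1 : ℝ) / (Nat.factorial i : ℝ) := by
    simpa using (hasSum_exp_real 1).summable
  have hu : Summable fun i => ‖u i‖ := by
    refine hfac.congr fun i => ?_
    rw [hu_def]
    simp [norm_div, abs_of_nonneg]
  have hv : Summable fun j => ‖v j‖ := by
    refine ((summable_pow_div_fact z).mul_left ‖θ ^ z / (Nat.factorial z : ℝ)‖).congr fun j => ?_
    rw [hv_def, norm_mul]
    congr 1
    exact (Real.norm_of_nonneg (by positivity)).symm
  have key := tsum_mul_tsum_eq_tsum_sum_range_of_summable_norm hu hv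
  have hU : ∑' i, u i = Real.exp (-1) := (hasSum_exp_real (-1)).tsum_eq
  have hV : ∑' j, v j = (θ ^ z / (Nat.factorial z : ℝ)) * ∑' j : ℕ, ((j : ℝ) ^ z / (Nat.factorial j : ℝ)) :=
    tsum_mul_left
  calc θ ^ z * bellDobinski z / (Nat.factorial z : ℝ)
      = (∑' i, u i) * (∑' j, v j) := by
        rw [hU, hV, bellDobinski, Real.exp_neg]
        ring
    _ = ∑' n : ℕ, ∑ k ∈ Finset.range (n + 1), u k * v (n - k) := key
    _ = ∑' n : ℕ, convPow (Tfun θ) n z / (Nat.factorial n : ℝ) :=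
        tsum_congr fun n => inner_eq θ z n
    _ = ∑ n ∈ Finset.range (z + 1), convPow (Tfun θ) n z / (Nat.factorial n : ℝ) := by
        refine tsum_eq_sum fun n hn => ?_
        rw [convPow_eq_zero (by simp [Tfun]) _ _ (by simpa using hn), zero_div]
noncomputable def gsum (θ c : ℝ) (z : ℕ) : ℝ :=
  ∑ n ∈ Finset.range (z + 1), c ^ n * convPow (Tfun θ) n z / (Nat.factorial n : ℝ)

noncomputable def gfun (θ c : ℝ) : ℕ → ℝ :=
  fun z => Real.exp (-(c * (Real.exp θ - 1))) * gsum θ c z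

lemma gsum_eq_range (θ c : ℝ) (z N : ℕ) (h : z ≤ N) :
    gsum θ c z = ∑ n ∈ Finset.range (N + 1), c ^ n * convPow (Tfun θ) n z / (Nat.factorial n : ℝ) := by
  refine Finset.sum_subset (by intro x hx; simp at hx ⊢; omega) fun n _ hn => ?_
  rw [convPow_eq_zero (by simp [Tfun]) _ _ (by simp at hn; omega), mul_zero, zero_div]

lemma conv_convPow (f : ℕ → ℝ) (a b z : ℕ) :
    ∑ y ∈ Finset.range (z + 1), convPow f a y * convPow f b (z - y) = convPow f (a + b) z := by
  have : conv (convPow f a) (convPow f b) z = convPow f (a + b) z := by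
    rw [conv_eq_coeff, mk_convPow, mk_convPow, convPow_eq_coeff, pow_add]
  simpa [conv] using this

lemma triangle (z : ℕ) (F : ℕ → ℕ → ℝ) (hF : ∀ i j, z < i + j → F i j = 0) :
    ∑ i ∈ Finset.range (z + 1), ∑ j ∈ Finset.range (z + 1), F i j
      = ∑ n ∈ Finset.range (z + 1), ∑ i ∈ Finset.range (n + 1), F i (n - i) := by
  have rhs : ∑ n ∈ Finset.range (z + 1), ∑ i ∈ Finset.range (n + 1), F i (n - i)
      = ∑ p ∈ (Finset.range (z + 1)).sigma (fun n => Finset.HasAntidiagonal.antidiagonal n),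
          F p.2.1 p.2.2 := by
    rw [Finset.sum_sigma]
    refine Finset.sum_congr rfl fun n _ => ?_
    simpa using (Finset.Nat.sum_antidiagonal_eq_sum_range_succ_mk (fun p => F p.1 p.2) n).symm
  rw [rhs, ← Finset.sum_product']
  have hzero : ∀ p ∈ Finset.range (z + 1) ×ˢ Finset.range (z + 1),
      p ∉ (Finset.range (z + 1) ×ˢ Finset.range (z + 1)).filter (fun p => p.1 + p.2 ≤ z) →
      F p.1 p.2 = 0 := by
    intro p hp hp'
    refine hF _ _ ?_
    simp only [Finset.mem_filter, hp, true_and, not_le] at hp'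
    exact hp'
  rw [← Finset.sum_filter_of_ne (p := fun p : ℕ × ℕ => p.1 + p.2 ≤ z)
    (fun p _ hne => le_of_not_gt fun hlt => hne (hF _ _ hlt))]
  refine Finset.sum_nbij' (fun p : ℕ × ℕ => (⟨p.1 + p.2, p⟩ : (_ : ℕ) × ℕ × ℕ))
    (fun s => s.2) ?_ ?_ ?_ ?_ ?_
  · intro p hp
    simp only [Finset.mem_filter, Finset.mem_product, Finset.mem_range] at hp
    simp only [Finset.mem_sigma, Finset.mem_range, Finset.HasAntidiagonal.mem_antidiagonal]
    exact ⟨by omega, trivial⟩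
  · intro s hs
    simp only [Finset.mem_sigma, Finset.mem_range, Finset.HasAntidiagonal.mem_antidiagonal] at hs
    simp only [Finset.mem_filter, Finset.mem_product, Finset.mem_range]
    omega
  · intro p _; rfl
  · intro s hs
    simp only [Finset.mem_sigma, Finset.mem_range, Finset.HasAntidiagonal.mem_antidiagonal] at hs
    exact Sigma.ext hs.2 HEq.rfl
  · intro p _; rfl
lemma binom_div (a b : ℝ) (s : ℕ) :
    ∑ i ∈ Finset.range (s + 1),
        a ^ i * b ^ (s - i) / ((Nat.factorial i : ℝ) * (Nat.factorial (s - i) : ℝ))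
      = (a + b) ^ s / (Nat.factorial s : ℝ) := by
  rw [add_pow, Finset.sum_div]
  refine Finset.sum_congr rfl fun i hi => ?_
  have hi' : i ≤ s := Nat.lt_succ_iff.mp (Finset.mem_range.mp hi)
  have hc : ((s.choose i : ℝ)) * (Nat.factorial i : ℝ) * (Nat.factorial (s - i) : ℝ)
      = (Nat.factorial s : ℝ) := by
    exact_mod_cast congrArg (Nat.cast (R := ℝ)) (Nat.choose_mul_factorial_mul_factorial hi')
  have h1 : (Nat.factorial i : ℝ) ≠ 0 := by positivity
  have h2 : (Nat.factorial (s - i) : ℝ) ≠ 0 := by positivity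
  have h3 : (Nat.factorial s : ℝ) ≠ 0 := by positivity
  field_simp
  rw [← hc]
  ring

lemma conv_gsum (θ a b : ℝ) (z : ℕ) :
    conv (gsum θ a) (gsum θ b) z = gsum θ (a + b) z := by
  unfold conv
  have step1 : ∀ y ∈ Finset.range (z + 1), gsum θ a y * gsum θ b (z - y) =
      ∑ n ∈ Finset.range (z + 1), ∑ k ∈ Finset.range (z + 1),
        (a ^ n * convPow (Tfun θ) n y / (Nat.factorial n : ℝ)) *
          (b ^ k * convPow (Tfun θ) k (z - y) / (Nat.factorial k : ℝ)) := by
    intro y hy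
    simp only [Finset.mem_range] at hy
    rw [gsum_eq_range θ a y z (by omega), gsum_eq_range θ b (z - y) z (by omega),
      Finset.sum_mul_sum]
  rw [Finset.sum_congr rfl step1, Finset.sum_comm]
  have step2 : ∀ n ∈ Finset.range (z + 1),
      ∑ y ∈ Finset.range (z + 1), ∑ k ∈ Finset.range (z + 1),
        (a ^ n * convPow (Tfun θ) n y / (Nat.factorial n : ℝ)) *
          (b ^ k * convPow (Tfun θ) k (z - y) / (Nat.factorial k : ℝ))
      = ∑ k ∈ Finset.range (z + 1),
          a ^ n * b ^ k / ((Nat.factorial n : ℝ) * (Nat.factorial k : ℝ)) *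
            convPow (Tfun θ) (n + k) z := by
    intro n _
    rw [Finset.sum_comm]
    refine Finset.sum_congr rfl fun k _ => ?_
    rw [← conv_convPow (Tfun θ) n k z, Finset.mul_sum]
    refine Finset.sum_congr rfl fun y _ => ?_
    ring
  rw [Finset.sum_congr rfl step2,
    triangle z _ (fun i j hij => by
      rw [convPow_eq_zero (by simp [Tfun]) _ _ hij, mul_zero])]
  refine Finset.sum_congr rfl fun s hs => ?_
  have : ∀ i ∈ Finset.range (s + 1),
      a ^ i * b ^ (s - i) / ((Nat.factorial i : ℝ) * (Nat.factorial (s - i) : ℝ)) *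
        convPow (Tfun θ) (i + (s - i)) z
      = a ^ i * b ^ (s - i) / ((Nat.factorial i : ℝ) * (Nat.factorial (s - i) : ℝ)) *
        convPow (Tfun θ) s z := by
    intro i hi
    simp only [Finset.mem_range] at hi
    rw [Nat.add_sub_cancel' (by omega)]
  rw [Finset.sum_congr rfl this, ← Finset.sum_mul, binom_div]
  ring

lemma conv_gfun (θ a b : ℝ) (z : ℕ) :
    conv (gfun θ a) (gfun θ b) z = gfun θ (a + b) z := by
  have : conv (gfun θ a) (gfun θ b) z =
      Real.exp (-(a * (Real.exp θ - 1))) * Real.exp (-(b * (Real.exp θ - 1))) *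
        conv (gsum θ a) (gsum θ b) z := by
    unfold conv gfun
    rw [Finset.mul_sum]
    refine Finset.sum_congr rfl fun y _ => ?_
    ring
  rw [this, conv_gsum, ← Real.exp_add, gfun]
  congr 2
  ring
lemma convPow_one (f : ℕ → ℝ) (z : ℕ) : convPow f 1 z = f z := by
  rw [convPow_eq_coeff, pow_one, PowerSeries.coeff_mk]

lemma convPow_gfun (θ c : ℝ) (k : ℕ) : ∀ z, convPow (gfun θ c) (k + 1) z
    = gfun θ ((k + 1 : ℕ) * c) z := by
  induction k with
  | zero => intro z; rw [convPow_one]; norm_num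
  | succ k ih =>
    intro z
    show conv (gfun θ c) (convPow (gfun θ c) (k + 1)) z = _
    rw [show convPow (gfun θ c) (k + 1) = gfun θ ((k + 1 : ℕ) * c) from funext ih,
      conv_gfun]
    congr 1
    push_cast
    ring

lemma convPow_nonneg {f : ℕ → ℝ} (hf : ∀ y, 0 ≤ f y) (n : ℕ) : ∀ z, 0 ≤ convPow f n z := by
  induction n with
  | zero => intro z; dsimp [convPow]; positivity
  | succ n ih =>
    intro z
    show 0 ≤ conv f (convPow f n) z
    exact Finset.sum_nonneg fun y _ => mul_nonneg (hf y) (ih _)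

lemma Tfun_nonneg {θ : ℝ} (hθ : 0 ≤ θ) (y : ℕ) : 0 ≤ Tfun θ y := by
  unfold Tfun
  split
  · exact le_refl 0
  · positivity

lemma gfun_nonneg {θ c : ℝ} (hθ : 0 ≤ θ) (hc : 0 ≤ c) (z : ℕ) : 0 ≤ gfun θ c z := by
  refine mul_nonneg (Real.exp_nonneg _) (Finset.sum_nonneg fun n _ => ?_)
  have := convPow_nonneg (Tfun_nonneg hθ) n z
  positivity

lemma bellPMF_eq (θ : ℝ) (z : ℕ) :
    gfun θ 1 z = bellPMF θ z := by
  unfold bellPMF gfun gsum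
  simp only [one_pow]
  rw [show (-(1 * (Real.exp θ - 1))) = 1 - Real.exp θ by ring]
  have : ∀ n ∈ Finset.range (z + 1),
      1 * convPow (Tfun θ) n z / (Nat.factorial n : ℝ)
        = convPow (Tfun θ) n z / (Nat.factorial n : ℝ) := fun n _ => by rw [one_mul]
  rw [Finset.sum_congr rfl this, ← bell_eq]
  ring

lemma hasSum_Tfun (θ : ℝ) : HasSum (Tfun θ) (Real.exp θ - 1) := by
  have h := (hasSum_exp_real θ).sub (hasSum_ite_eq 0 (1 : ℝ))
  have e : (fun z : ℕ => θ ^ z / (Nat.factorial z : ℝ) - if z = 0 then 1 else 0) = Tfun θ := by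
    funext z
    cases z with
    | zero => simp [Tfun]
    | succ n => simp [Tfun]
  rwa [e] at h

lemma hasSum_convPow_Tfun {θ : ℝ} (hθ : 0 ≤ θ) (n : ℕ) :
    HasSum (convPow (Tfun θ) n) ((Real.exp θ - 1) ^ n) := by
  induction n with
  | zero =>
    rw [pow_zero]
    exact hasSum_ite_eq 0 (1 : ℝ)
  | succ n ih =>
    have hf : Summable fun y => ‖Tfun θ y‖ := by
      rw [show (fun y => ‖Tfun θ y‖) = Tfun θ from funext fun y =>
        Real.norm_of_nonneg (Tfun_nonneg hθ y)]
      exact (hasSum_Tfun θ).summable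
    have hg : Summable fun y => ‖convPow (Tfun θ) n y‖ := by
      rw [show (fun y => ‖convPow (Tfun θ) n y‖) = convPow (Tfun θ) n from funext fun y =>
        Real.norm_of_nonneg (convPow_nonneg (Tfun_nonneg hθ) n y)]
      exact ih.summable
    have key := hasSum_sum_range_mul_of_summable_norm hf hg
    rw [(hasSum_Tfun θ).tsum_eq, ih.tsum_eq, ← pow_succ'] at key
    exact key
lemma F_eq_zero {θ c : ℝ} {n z : ℕ} (h : z < n) :
    c ^ n * convPow (Tfun θ) n z / (Nat.factorial n : ℝ) = 0 := by
  rw [convPow_eq_zero (by simp [Tfun]) _ _ h, mul_zero, zero_div]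

set_option maxHeartbeats 1000000 in
lemma hasSum_gfun {θ : ℝ} (hθ : 0 < θ) {c : ℝ} (hc : 0 ≤ c) : HasSum (gfun θ c) 1 := by
  set μ := Real.exp θ - 1 with hμ_def
  set F : ℕ × ℕ → ℝ := fun p => c ^ p.1 * convPow (Tfun θ) p.1 p.2 / (Nat.factorial p.1 : ℝ)
    with hF_def
  have h1 : ∀ n : ℕ, HasSum (fun z => F (n, z)) (c ^ n * μ ^ n / (Nat.factorial n : ℝ)) :=
    fun n => (((hasSum_convPow_Tfun hθ.le n).mul_left (c ^ n)).div_const _)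
  have h2 : HasSum (fun n : ℕ => c ^ n * μ ^ n / (Nat.factorial n : ℝ)) (Real.exp (c * μ)) := by
    have h := hasSum_exp_real (c * μ)
    rwa [show (fun n : ℕ => (c * μ) ^ n / (Nat.factorial n : ℝ))
      = fun n => c ^ n * μ ^ n / (Nat.factorial n : ℝ) from funext fun n => by rw [mul_pow]] at h
  have hnonneg : ∀ p, 0 ≤ F p := by
    intro p
    have := convPow_nonneg (Tfun_nonneg hθ.le) p.1 p.2
    have := pow_nonneg hc p.1
    positivity
  have hsummable : Summable F :=
    (summable_prod_of_nonneg hnonneg).mpr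
      ⟨fun n => (h1 n).summable, h2.summable.congr fun n => ((h1 n).tsum_eq).symm⟩
  have htsum : ∑' p, F p = Real.exp (c * μ) := by
    rw [hsummable.tsum_prod' fun n => (h1 n).summable]
    rw [tsum_congr fun n => (h1 n).tsum_eq]
    exact h2.tsum_eq
  have hfib : ∀ z : ℕ, HasSum (fun n => F (n, z)) (gsum θ c z) := by
    intro z
    refine hasSum_sum_of_ne_finset_zero (s := Finset.range (z + 1)) fun n hn => ?_
    exact F_eq_zero (by simpa using hn)
  have hGs : HasSum (fun p : ℕ × ℕ => F p.swap) (Real.exp (c * μ)) := by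
    rw [← htsum]
    exact (Equiv.prodComm ℕ ℕ).hasSum_iff.mpr hsummable.hasSum
  have hG : HasSum (gsum θ c) (Real.exp (c * μ)) :=
    HasSum.prod_fiberwise hGs fun z => hfib z
  have := hG.mul_left (Real.exp (-(c * μ)))
  rwa [← Real.exp_add, neg_add_cancel, Real.exp_zero] at this

lemma convPow_smul (c : ℝ) (f : ℕ → ℝ) (n z : ℕ) :
    convPow (fun y => c * f y) n z = c ^ n * convPow f n z := by
  rw [convPow_eq_coeff, convPow_eq_coeff]
  have hmk : PowerSeries.mk (fun y => c * f y) = c • PowerSeries.mk f := by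
    ext w
    rw [PowerSeries.coeff_mk, PowerSeries.coeff_smul, PowerSeries.coeff_mk, smul_eq_mul]
  rw [hmk, smul_pow, PowerSeries.coeff_smul, smul_eq_mul]


lemma r_eq (θ : ℝ) (hθ : 0 < θ) (m : ℕ) (hm : 1 ≤ m) (z : ℕ) :
    (∑' n : ℕ,
        Real.exp (-((Real.exp θ - 1) / m)) * ((Real.exp θ - 1) / m) ^ n /
            (Nat.factorial n : ℝ) * convPow (ztPoisson θ) n z)
      = gfun θ (1 / (m : ℝ)) z := by
  have hμ : 0 < Real.exp θ - 1 := by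
    rw [sub_pos, ← Real.exp_zero]
    exact Real.exp_lt_exp.mpr hθ
  have hm' : ((m : ℝ)) ≠ 0 := by
    have : (0 : ℝ) < m := by exact_mod_cast hm
    linarith
  have hzt : ztPoisson θ = fun y => (Real.exp θ - 1)⁻¹ * Tfun θ y := by
    funext y
    unfold ztPoisson Tfun
    split
    · rw [mul_zero]
    · rw [← div_div, div_eq_mul_inv, mul_comm]
  have hterm : ∀ n : ℕ,
      Real.exp (-((Real.exp θ - 1) / m)) * ((Real.exp θ - 1) / m) ^ n /
          (Nat.factorial n : ℝ) * convPow (ztPoisson θ) n z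
        = Real.exp (-(1 / (m : ℝ) * (Real.exp θ - 1))) *
            ((1 / (m : ℝ)) ^ n * convPow (Tfun θ) n z / (Nat.factorial n : ℝ)) := by
    intro n
    rw [hzt, convPow_smul,
      show -((Real.exp θ - 1) / m) = -(1 / (m : ℝ) * (Real.exp θ - 1)) by ring]
    have hpow : ((Real.exp θ - 1) / m) ^ n * ((Real.exp θ - 1)⁻¹) ^ n = (1 / (m : ℝ)) ^ n := by
      rw [← mul_pow]
      congr 1
      field_simp
    linear_combination
      (Real.exp (-(1 / (m : ℝ) * (Real.exp θ - 1))) * convPow (Tfun θ) n z /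
        (Nat.factorial n : ℝ)) * hpow
  rw [tsum_congr hterm, tsum_mul_left,
    tsum_eq_sum (s := Finset.range (z + 1)) fun n hn => F_eq_zero (by simpa using hn)]
  rfl


end BellAux

/-- Infinite divisibility of the Bell distribution: for every `θ > 0` and every integer
`m ≥ 1`, there is a probability mass function `r` on `ℕ` with `p_θ = r^{*m}`; explicitly one
may take `r(z) = ∑_{n=0}^∞ (e^{-μ/m} (μ/m)^n / n!) ⬝ q^{*n}(z)` where `μ = e^θ - 1` and `q`
is the zero-truncated Poisson(θ) mass function. -/
theorem bell_infinitely_divisible (θ : ℝ) (hθ : 0 < θ) (m : ℕ) (hm : 1 ≤ m) :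
    ∃ r : ℕ → ℝ,
      (r = fun z : ℕ =>
        ∑' n : ℕ,
          Real.exp (-((Real.exp θ - 1) / m)) * ((Real.exp θ - 1) / m) ^ n /
              (Nat.factorial n : ℝ) * convPow (ztPoisson θ) n z) ∧
      (∀ z : ℕ, 0 ≤ r z) ∧
      HasSum r 1 ∧
      ∀ z : ℕ, convPow r m z = bellPMF θ z := by
  have hr : (fun z : ℕ =>
      ∑' n : ℕ,
        Real.exp (-((Real.exp θ - 1) / m)) * ((Real.exp θ - 1) / m) ^ n /
            (Nat.factorial n : ℝ) * convPow (ztPoisson θ) n z)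
      = gfun θ (1 / (m : ℝ)) := funext (r_eq θ hθ m hm)
  have hm' : (0 : ℝ) < m := by exact_mod_cast hm
  refine ⟨_, rfl, ?_, ?_, ?_⟩
  · intro z
    rw [r_eq θ hθ m hm z]
    exact gfun_nonneg hθ.le (by positivity) z
  · rw [hr]
    exact hasSum_gfun hθ (by positivity)
  · rw [hr]
    intro z
    obtain ⟨k, rfl⟩ : ∃ k, m = k + 1 := ⟨m - 1, by omega⟩
    rw [convPow_gfun]
    have h1 : ((k + 1 : ℕ) : ℝ) * (1 / ((k + 1 : ℕ) : ℝ)) = 1 := by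
      field_simp
    rw [h1, bellPMF_eq]
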